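/- The map γ⁻² P² = (n / Tr P²) P² : TM → TΣ is the orthogonal projection of TM onto the tangent space TΣ; in particular (1/n) Tr P² = γ² where Tr denotes the trace over the ambient indices. -/

import Mathlib

open scoped BigOperators
noncomputable section

open Classical in
/-- The totally antisymmetric Levi-Civita symbol with `ε^{01⋯(n-1)} = 1`. -/
def eps {n : ℕ} (v : Fin n → Fin n) : ℝ :=
  if h : Function.Bijective v then ((Equiv.Perm.sign (Equiv.ofBijective v h) : ℤ) : ℝ) else 0

/-- Partial derivative `∂_a f` of a function on the chart `ℝ^ν` of `Σ`. -/
def pd {ν : ℕ} (a : Fin ν) (f : (Fin ν → ℝ) → ℝ) (p : Fin ν → ℝ) : ℝ :=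
  fderiv ℝ f p (Pi.single a 1)

/-- The Nambu bracket `{f₁,…,f_ν} = ρ⁻¹ ε^{a₁⋯a_ν} (∂_{a₁}f₁)⋯(∂_{a_ν}f_ν)`. -/
def nb {ν : ℕ} (ρ : (Fin ν → ℝ) → ℝ) (f : Fin ν → (Fin ν → ℝ) → ℝ) (p : Fin ν → ℝ) : ℝ :=
  (ρ p)⁻¹ * ∑ σ : Fin ν → Fin ν, eps σ * ∏ a : Fin ν, pd (σ a) (f a) p

lemma eps_perm {n : ℕ} (σ : Equiv.Perm (Fin n)) : eps ⇑σ = ((Equiv.Perm.sign σ : ℤ) : ℝ) := by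
  classical
  rw [eps, dif_pos σ.bijective]
  have : Equiv.ofBijective ⇑σ σ.bijective = σ := Equiv.ext fun x => rfl
  rw [this]

lemma sum_eps_mul {n : ℕ} (F : (Fin n → Fin n) → ℝ) :
    ∑ v : Fin n → Fin n, eps v * F v
      = ∑ σ : Equiv.Perm (Fin n), ((Equiv.Perm.sign σ : ℤ) : ℝ) * F ⇑σ := by
  classical
  rw [← Finset.sum_subset (Finset.subset_univ
      ((Finset.univ : Finset (Equiv.Perm (Fin n))).image
        (fun σ : Equiv.Perm (Fin n) => (σ : Fin n → Fin n))))]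
  · rw [Finset.sum_image (fun a _ b _ h => Equiv.coe_fn_injective h)]
    exact Finset.sum_congr rfl fun σ _ => by rw [eps_perm]
  · intro v _ hv
    have hb : ¬ Function.Bijective v := fun hb =>
      hv (Finset.mem_image.mpr ⟨Equiv.ofBijective v hb, Finset.mem_univ _, rfl⟩)
    rw [eps, dif_neg hb, zero_mul]

lemma det_eq_sum_perm {n : ℕ} (M : Matrix (Fin n) (Fin n) ℝ) :
    ∑ τ : Equiv.Perm (Fin n), ((Equiv.Perm.sign τ : ℤ) : ℝ) * ∏ l, M l (τ l) = M.det := by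
  rw [← Matrix.det_transpose, Matrix.det_apply]
  exact Finset.sum_congr rfl fun τ _ => by
    rw [Units.smul_def, zsmul_eq_mul]
    norm_num

lemma det_updateRow_eq_sum {n : ℕ} (g : Matrix (Fin n) (Fin n) ℝ) (a : Fin n) (v : Fin n → ℝ) :
    (g.updateRow a v).det = ∑ c, Matrix.adjugate g c a * v c := by
  rw [← Matrix.cramer_transpose_apply, Matrix.cramer_eq_adjugate_mulVec,
    ← Matrix.adjugate_transpose, Matrix.mulVec]
  simp [dotProduct, Matrix.transpose_apply]

lemma sign_sq {n : ℕ} (σ : Equiv.Perm (Fin n)) :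
    ((Equiv.Perm.sign σ : ℤ) : ℝ) * ((Equiv.Perm.sign σ : ℤ) : ℝ) = 1 := by
  have h : (Equiv.Perm.sign σ) * (Equiv.Perm.sign σ) = 1 := Int.units_mul_self _
  have h2 : ((Equiv.Perm.sign σ : ℤ) * (Equiv.Perm.sign σ : ℤ) : ℤ) = 1 := by
    rw [← Units.val_mul, h]; rfl
  rw [← Int.cast_mul, h2, Int.cast_one]

lemma perm_double_sum {d : ℕ} (g : Matrix (Fin (d+1)) (Fin (d+1)) ℝ)
    (u v : Fin (d+1) → ℝ) :
    ∑ σ : Equiv.Perm (Fin (d+1)), ((Equiv.Perm.sign σ : ℤ) : ℝ) *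
      ∑ τ : Equiv.Perm (Fin (d+1)), ((Equiv.Perm.sign τ : ℤ) : ℝ) *
        (u (σ 0) * v (τ 0) * ∏ l : Fin d, g (σ l.succ) (τ l.succ))
      = (d.factorial : ℝ) * ∑ a, ∑ c, u a * Matrix.adjugate g c a * v c := by
  classical
  have key : ∀ σ : Equiv.Perm (Fin (d+1)),
      ∑ τ : Equiv.Perm (Fin (d+1)), ((Equiv.Perm.sign τ : ℤ) : ℝ) *
        (u (σ 0) * v (τ 0) * ∏ l : Fin d, g (σ l.succ) (τ l.succ))
      = ((Equiv.Perm.sign σ : ℤ) : ℝ) * (u (σ 0) * (g.updateRow (σ 0) v).det) := by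
    intro σ
    have h1 : ∀ τ : Equiv.Perm (Fin (d+1)),
        v (τ 0) * ∏ l : Fin d, g (σ l.succ) (τ l.succ)
        = ∏ l, ((g.updateRow (σ 0) v).submatrix σ id) l (τ l) := by
      intro τ
      rw [Fin.prod_univ_succ]
      congr 1
      · rw [Matrix.submatrix_apply, Matrix.updateRow_self]; rfl
      · refine Finset.prod_congr rfl fun l _ => ?_
        rw [Matrix.submatrix_apply, Matrix.updateRow_ne (σ.injective.ne (Fin.succ_ne_zero l))]
        rfl
    have h2 : ∑ τ : Equiv.Perm (Fin (d+1)), ((Equiv.Perm.sign τ : ℤ) : ℝ) *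
          (u (σ 0) * v (τ 0) * ∏ l : Fin d, g (σ l.succ) (τ l.succ))
        = u (σ 0) * ((g.updateRow (σ 0) v).submatrix σ id).det := by
      rw [← det_eq_sum_perm, Finset.mul_sum]
      refine Finset.sum_congr rfl fun τ _ => ?_
      rw [← h1 τ]; ring
    rw [h2, Matrix.det_permute]
    ring
  calc ∑ σ : Equiv.Perm (Fin (d+1)), ((Equiv.Perm.sign σ : ℤ) : ℝ) *
      ∑ τ : Equiv.Perm (Fin (d+1)), ((Equiv.Perm.sign τ : ℤ) : ℝ) *
        (u (σ 0) * v (τ 0) * ∏ l : Fin d, g (σ l.succ) (τ l.succ))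
      = ∑ σ : Equiv.Perm (Fin (d+1)), u (σ 0) * (g.updateRow (σ 0) v).det := by
        refine Finset.sum_congr rfl fun σ _ => ?_
        rw [key σ, ← mul_assoc, ← mul_assoc, sign_sq, one_mul]
    _ = ∑ pr : Fin (d+1) × Equiv.Perm (Fin d),
          u ((Equiv.Perm.decomposeFin.symm pr) 0) *
            (g.updateRow ((Equiv.Perm.decomposeFin.symm pr) 0) v).det := by
        rw [Equiv.sum_comp (Equiv.Perm.decomposeFin.symm)
          (fun σ : Equiv.Perm (Fin (d+1)) => u (σ 0) * (g.updateRow (σ 0) v).det)]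
    _ = ∑ a : Fin (d+1), ∑ _e : Equiv.Perm (Fin d), u a * (g.updateRow a v).det := by
        rw [Fintype.sum_prod_type]
        exact Finset.sum_congr rfl fun a _ => Finset.sum_congr rfl fun e _ => by
          rw [Equiv.Perm.decomposeFin_symm_apply_zero]
    _ = (d.factorial : ℝ) * ∑ a, ∑ c, u a * Matrix.adjugate g c a * v c := by
        rw [Finset.mul_sum]
        refine Finset.sum_congr rfl fun a _ => ?_
        rw [Finset.sum_const, Finset.card_univ, Fintype.card_perm, Fintype.card_fin,
          det_updateRow_eq_sum, nsmul_eq_mul]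
        simp only [Finset.mul_sum]
        exact Finset.sum_congr rfl fun c _ => by ring

lemma sum4_swap {α β γ' δ : Type*} [Fintype α] [Fintype β] [Fintype γ'] [Fintype δ]
    (f : α → β → γ' → δ → ℝ) :
    ∑ a, ∑ b, ∑ c, ∑ e, f a b c e = ∑ c, ∑ e, ∑ a, ∑ b, f a b c e := by
  calc ∑ a, ∑ b, ∑ c, ∑ e, f a b c e
      = ∑ a, ∑ c, ∑ b, ∑ e, f a b c e :=
        Finset.sum_congr rfl fun a _ => Finset.sum_comm
    _ = ∑ c, ∑ a, ∑ b, ∑ e, f a b c e := Finset.sum_comm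
    _ = ∑ c, ∑ a, ∑ e, ∑ b, f a b c e :=
        Finset.sum_congr rfl fun c _ => Finset.sum_congr rfl fun a _ => Finset.sum_comm
    _ = ∑ c, ∑ e, ∑ a, ∑ b, f a b c e :=
        Finset.sum_congr rfl fun c _ => Finset.sum_comm

lemma prod_sum_fn {d m : ℕ} (f : Fin d → Fin m → ℝ) :
    ∏ l, ∑ j, f l j = ∑ J : Fin d → Fin m, ∏ l, f l (J l) := Fintype.prod_sum f
set_option maxHeartbeats 2000000 in
/-- For `Σ^n ⊂ (M^m, ḡ)` (here `n = d+1`), the map `γ⁻²P² = (n/Tr P²)P² : TM → TΣ` is the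
orthogonal projection of `TM` onto `TΣ` (which sends `X` to `ḡ(X,e_a)g^{ab}e_b`); in
particular `(1/n) Tr P² = γ²`, where `Tr` is the trace over the ambient indices. -/
theorem P_squared_projection (d m : ℕ)
    (ρ : (Fin (d + 1) → ℝ) → ℝ)
    (x : Fin m → (Fin (d + 1) → ℝ) → ℝ)
    (gbar : (Fin (d + 1) → ℝ) → Matrix (Fin m) (Fin m) ℝ)
    (p : Fin (d + 1) → ℝ)
    (hgbar : (gbar p).PosDef)
    (hρ : ρ p ≠ 0)
    (gind : Matrix (Fin (d + 1)) (Fin (d + 1)) ℝ)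
    (hgind : gind = Matrix.of fun a c =>
      ∑ i, ∑ j, gbar p i j * pd a (x i) p * pd c (x j) p)
    (hgpos : 0 < gind.det)
    (γ : ℝ) (hγ : γ = Real.sqrt gind.det / ρ p)
    (P : Fin m → (Fin d → Fin m) → ℝ)
    (hP : P = fun i J => (Real.sqrt (d.factorial : ℝ))⁻¹ *
      nb ρ (Fin.cons (x i) fun l => x (J l)) p)
    (P2up : Fin m → Fin m → ℝ)
    (hP2up : P2up = fun i k => ∑ J : Fin d → Fin m, ∑ J' : Fin d → Fin m,
      P i J * P k J' * ∏ l : Fin d, gbar p (J l) (J' l))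
    (P2X : (Fin m → ℝ) → Fin m → ℝ)
    (hP2X : P2X = fun X i => ∑ j, ∑ k, P2up i j * gbar p j k * X k)
    (TrP2 : ℝ) (hTrP2 : TrP2 = ∑ i, ∑ j, P2up i j * gbar p j i)
    -- the orthogonal projection of `TM` onto `TΣ`
    (proj : (Fin m → ℝ) → Fin m → ℝ)
    (hproj : proj = fun X i => ∑ a, ∑ c,
      (∑ j, ∑ k, gbar p j k * X j * pd a (x k) p) * gind⁻¹ a c * pd c (x i) p) :
    (1 / ((d : ℝ) + 1)) * TrP2 = γ ^ 2 ∧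
    (∀ (X : Fin m → ℝ) (i : Fin m), (γ ^ 2)⁻¹ * P2X X i = proj X i) ∧
    (∀ (X : Fin m → ℝ) (i : Fin m), (((d : ℝ) + 1) / TrP2) * P2X X i = proj X i) := by
  classical
  -- symmetry of the ambient metric
  have hgbs : ∀ i j, gbar p i j = gbar p j i := by
    intro i j
    have h := hgbar.1
    have h2 := congrFun (congrFun h j) i
    simpa [Matrix.conjTranspose_apply] using h2
  have hge : ∀ a c, gind a c = ∑ i, ∑ j, gbar p i j * pd a (x i) p * pd c (x j) p := by
    intro a c; rw [hgind]; rfl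
  have hgsymm : ∀ a c, gind a c = gind c a := by
    intro a c
    calc gind a c = ∑ i, ∑ j, gbar p i j * pd a (x i) p * pd c (x j) p := hge a c
      _ = ∑ j, ∑ i, gbar p i j * pd a (x i) p * pd c (x j) p := Finset.sum_comm
      _ = gind c a := by
          rw [hge c a]
          refine Finset.sum_congr rfl fun j _ => Finset.sum_congr rfl fun i _ => ?_
          rw [hgbs i j]; ring
  have hgT : gind.transpose = gind := Matrix.ext fun a c => hgsymm c a
  have hdet0 : gind.det ≠ 0 := ne_of_gt hgpos
  have hunit : IsUnit gind.det := isUnit_iff_ne_zero.mpr hdet0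
  have hinvsymm : ∀ a c, gind⁻¹ a c = gind⁻¹ c a := by
    intro a c
    have h : (gind⁻¹).transpose = gind⁻¹ := by rw [Matrix.transpose_nonsing_inv, hgT]
    have h2 := congrFun (congrFun h c) a
    simpa [Matrix.transpose_apply] using h2
  have hadj : ∀ a c, gind.adjugate a c = gind.det * gind⁻¹ a c := by
    intro a c
    rw [Matrix.inv_def, Ring.inverse_eq_inv']
    rw [Matrix.smul_apply, smul_eq_mul, ← mul_assoc, mul_inv_cancel₀ hdet0, one_mul]
  have hγ2 : γ ^ 2 = gind.det * ((ρ p)⁻¹ * (ρ p)⁻¹) := by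
    rw [hγ, div_pow, Real.sq_sqrt hgpos.le]
    field_simp
  have hγ2ne : γ ^ 2 ≠ 0 := by
    rw [hγ2]
    exact mul_ne_zero hdet0 (mul_ne_zero (inv_ne_zero hρ) (inv_ne_zero hρ))
  have hfact : (d.factorial : ℝ) ≠ 0 := Nat.cast_ne_zero.mpr d.factorial_ne_zero
  have hc1 : (Real.sqrt (d.factorial : ℝ))⁻¹ * (Real.sqrt (d.factorial : ℝ))⁻¹
      = ((d.factorial : ℝ))⁻¹ := by
    rw [← mul_inv, Real.mul_self_sqrt (by positivity)]
  have hPexp : ∀ i J, P i J = (Real.sqrt (d.factorial : ℝ))⁻¹ *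
      ((ρ p)⁻¹ * ∑ σ : Fin (d+1) → Fin (d+1), eps σ *
        (pd (σ 0) (x i) p * ∏ l : Fin d, pd (σ l.succ) (x (J l)) p)) := by
    intro i J
    rw [hP]
    simp only [nb]
    refine congrArg _ (congrArg _ (Finset.sum_congr rfl fun σ _ => congrArg _ ?_))
    rw [Fin.prod_univ_succ]
    simp
  have hJJ : ∀ (σ τ : Fin (d+1) → Fin (d+1)),
      ∑ J : Fin d → Fin m, ∑ J' : Fin d → Fin m,
        (∏ l : Fin d, pd (σ l.succ) (x (J l)) p) * (∏ l : Fin d, pd (τ l.succ) (x (J' l)) p)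
          * (∏ l : Fin d, gbar p (J l) (J' l))
      = ∏ l : Fin d, gind (σ l.succ) (τ l.succ) := by
    intro σ τ
    calc ∑ J : Fin d → Fin m, ∑ J' : Fin d → Fin m,
        (∏ l : Fin d, pd (σ l.succ) (x (J l)) p) * (∏ l : Fin d, pd (τ l.succ) (x (J' l)) p)
          * (∏ l : Fin d, gbar p (J l) (J' l))
        = ∑ J : Fin d → Fin m, ∑ J' : Fin d → Fin m, ∏ l : Fin d,
            (pd (σ l.succ) (x (J l)) p * pd (τ l.succ) (x (J' l)) p * gbar p (J l) (J' l)) := by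
          refine Finset.sum_congr rfl fun J _ => Finset.sum_congr rfl fun J' _ => ?_
          rw [← Finset.prod_mul_distrib, ← Finset.prod_mul_distrib]
      _ = ∑ J : Fin d → Fin m, ∏ l : Fin d, ∑ j',
            (pd (σ l.succ) (x (J l)) p * pd (τ l.succ) (x j') p * gbar p (J l) j') := by
          refine Finset.sum_congr rfl fun J _ => ?_
          exact (prod_sum_fn (fun (l : Fin d) (j' : Fin m) => pd (σ l.succ) (x (J l)) p
            * pd (τ l.succ) (x j') p * gbar p (J l) j')).symm
      _ = ∏ l : Fin d, ∑ j, ∑ j',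
            (pd (σ l.succ) (x j) p * pd (τ l.succ) (x j') p * gbar p j j') := by
          exact (prod_sum_fn (fun (l : Fin d) (j : Fin m) => ∑ j', pd (σ l.succ) (x j) p
            * pd (τ l.succ) (x j') p * gbar p j j')).symm
      _ = ∏ l : Fin d, gind (σ l.succ) (τ l.succ) := by
          refine Finset.prod_congr rfl fun l _ => ?_
          rw [hge]
          exact Finset.sum_congr rfl fun j _ => Finset.sum_congr rfl fun j' _ => by ring
  have hP2e : ∀ i k, P2up i k = ((d.factorial : ℝ))⁻¹ * ((ρ p)⁻¹ * (ρ p)⁻¹) *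
      ∑ σ : Fin (d+1) → Fin (d+1), eps σ * ∑ τ : Fin (d+1) → Fin (d+1), eps τ *
        (pd (σ 0) (x i) p * pd (τ 0) (x k) p * ∏ l : Fin d, gind (σ l.succ) (τ l.succ)) := by
    intro i k
    simp only [hP2up]
    simp only [hPexp]
    simp only [Finset.mul_sum, Finset.sum_mul]
    rw [sum4_swap]
    conv_lhs => rw [Finset.sum_comm]
    refine Finset.sum_congr rfl fun σ _ => Finset.sum_congr rfl fun τ _ => ?_
    rw [← hJJ σ τ]
    simp only [Finset.mul_sum, Finset.sum_mul]
    refine Finset.sum_congr rfl fun J _ => Finset.sum_congr rfl fun J' _ => ?_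
    rw [← hc1]
    ring
  have cancel : ∀ (r s : ℝ), ((d.factorial : ℝ))⁻¹ * r * ((d.factorial : ℝ) * s) = r * s := by
    intro r s
    calc ((d.factorial : ℝ))⁻¹ * r * ((d.factorial : ℝ) * s)
        = ((d.factorial : ℝ))⁻¹ * (d.factorial : ℝ) * (r * s) := by ring
      _ = r * s := by rw [inv_mul_cancel₀ hfact, one_mul]
  have hP2final : ∀ i k, P2up i k = γ ^ 2 *
      ∑ a, ∑ c, pd a (x i) p * gind⁻¹ a c * pd c (x k) p := by
    intro i k
    have hS : ∑ a, ∑ c, pd a (x i) p * gind.adjugate c a * pd c (x k) p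
        = gind.det * ∑ a, ∑ c, pd a (x i) p * gind⁻¹ a c * pd c (x k) p := by
      rw [Finset.mul_sum]
      refine Finset.sum_congr rfl fun a _ => ?_
      rw [Finset.mul_sum]
      refine Finset.sum_congr rfl fun c _ => ?_
      rw [hadj c a, hinvsymm c a]
      ring
    rw [hP2e i k, sum_eps_mul]
    simp only [sum_eps_mul]
    rw [perm_double_sum gind (fun a => pd a (x i) p) (fun c => pd c (x k) p), hS,
      cancel ((ρ p)⁻¹ * (ρ p)⁻¹) _, hγ2]
    ring
  have hTr : TrP2 = ((d : ℝ) + 1) * γ ^ 2 := by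
    rw [hTrP2]
    simp only [hP2final]
    calc ∑ i, ∑ j, (γ ^ 2 * ∑ a, ∑ c, pd a (x i) p * gind⁻¹ a c * pd c (x j) p) * gbar p j i
        = γ ^ 2 * ∑ a, ∑ c, gind⁻¹ a c *
            ∑ i, ∑ j, gbar p i j * pd c (x i) p * pd a (x j) p := by
          simp only [Finset.mul_sum, Finset.sum_mul]
          rw [sum4_swap]
          refine Finset.sum_congr rfl fun a _ => Finset.sum_congr rfl fun c _ => ?_
          conv_lhs => rw [Finset.sum_comm]
          refine Finset.sum_congr rfl fun i _ => Finset.sum_congr rfl fun j _ => ?_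
          ring
      _ = γ ^ 2 * ∑ a, ∑ c, gind⁻¹ a c * gind c a := by
          refine congrArg _ (Finset.sum_congr rfl fun a _ =>
            Finset.sum_congr rfl fun c _ => ?_)
          rw [hge c a]
      _ = γ ^ 2 * ∑ a, (gind⁻¹ * gind) a a := by
          refine congrArg _ (Finset.sum_congr rfl fun a _ => ?_)
          rw [Matrix.mul_apply]
      _ = γ ^ 2 * ((d : ℝ) + 1) := by
          rw [Matrix.nonsing_inv_mul gind hunit]
          simp [Matrix.one_apply]
      _ = ((d : ℝ) + 1) * γ ^ 2 := mul_comm _ _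
  have hd1 : ((d : ℝ) + 1) ≠ 0 := by positivity
  have main2 : ∀ (X : Fin m → ℝ) (i : Fin m), (γ ^ 2)⁻¹ * P2X X i = proj X i := by
    intro X i
    simp only [hP2X, hproj, hP2final]
    simp only [Finset.mul_sum, Finset.sum_mul]
    rw [sum4_swap]
    conv_lhs => rw [Finset.sum_comm]
    refine Finset.sum_congr rfl fun a _ => Finset.sum_congr rfl fun c _ => ?_
    conv_lhs => rw [Finset.sum_comm]
    refine Finset.sum_congr rfl fun j _ => Finset.sum_congr rfl fun k _ => ?_
    rw [hinvsymm c a, hgbs k j]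
    field_simp
    have hγne : γ ≠ 0 := fun h => hγ2ne (by rw [h]; ring)
    linear_combination (pd c (x i) p * gind⁻¹ a c * pd a (x k) p * gbar p j k * X j) * mul_inv_cancel₀ hγne
  refine ⟨?_, main2, ?_⟩
  · rw [hTr, one_div, inv_mul_cancel_left₀ hd1]
  · intro X i
    rw [hTr]
    have e1 : ((d : ℝ) + 1) / (((d : ℝ) + 1) * γ ^ 2) = (γ ^ 2)⁻¹ := by
      rw [div_mul_eq_div_div, div_self hd1, one_div]
    rw [e1]
    exact main2 X i
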